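/- arXiv:1712.08276 — 2 statements merged into one kernel-verified Lean document; each statement's English description precedes it below -/
import Mathlib

section
/- Let G be a monoidal comonad on a monoidal category C with braiding y on G (satisfying the four braided cowarping axioms). Then the square GX⊗GZ →^{y} GZ⊗GX →^{1⊗δ} GZ⊗G²X commutes with GX⊗GZ →^{δ⊗1} G²X⊗GZ →^{y} GZ⊗G²X, and consequently the square with both legs δ⊗δ : GX⊗GZ → G²X⊗G²Z and y on top and bottom commutes: y ∘ (δ⊗δ) = (δ⊗δ) ∘ y as maps GX⊗GZ → G²Z⊗G²X. -/
open CategoryTheory MonoidalCategory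

universe v u

variable (C : Type u) [Category.{v} C] [MonoidalCategory C]

/-- A monoidal comonad on a monoidal category `C`: a comonad `(G, δ, ε)` whose
underlying functor is lax monoidal via `G₂, G₀`, and whose comultiplication and
counit are monoidal natural transformations. -/
structure MonoidalComonad where
  G : C ⥤ C
  δ : ∀ X : C, G.obj X ⟶ G.obj (G.obj X)
  ε : ∀ X : C, G.obj X ⟶ X
  δ_natural : ∀ {X Y : C} (f : X ⟶ Y), G.map f ≫ δ Y = δ X ≫ G.map (G.map f)
  ε_natural : ∀ {X Y : C} (f : X ⟶ Y), G.map f ≫ ε Y = ε X ≫ f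
  coassoc : ∀ X : C, δ X ≫ δ (G.obj X) = δ X ≫ G.map (δ X)
  counit_left : ∀ X : C, δ X ≫ ε (G.obj X) = 𝟙 (G.obj X)
  counit_right : ∀ X : C, δ X ≫ G.map (ε X) = 𝟙 (G.obj X)
  G₂ : ∀ X Y : C, G.obj X ⊗ G.obj Y ⟶ G.obj (X ⊗ Y)
  G₀ : 𝟙_ C ⟶ G.obj (𝟙_ C)
  G₂_natural : ∀ {X X' Y Y' : C} (f : X ⟶ X') (g : Y ⟶ Y'),
      (G.map f ⊗ₘ G.map g) ≫ G₂ X' Y' = G₂ X Y ≫ G.map (f ⊗ₘ g)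
  lax_assoc : ∀ X Y Z : C,
      (G₂ X Y ▷ G.obj Z) ≫ G₂ (X ⊗ Y) Z ≫ G.map (α_ X Y Z).hom =
        (α_ (G.obj X) (G.obj Y) (G.obj Z)).hom ≫ (G.obj X ◁ G₂ Y Z) ≫
          G₂ X (Y ⊗ Z)
  lax_left_unit : ∀ X : C,
      (G₀ ▷ G.obj X) ≫ G₂ (𝟙_ C) X ≫ G.map (λ_ X).hom = (λ_ (G.obj X)).hom
  lax_right_unit : ∀ X : C,
      (G.obj X ◁ G₀) ≫ G₂ X (𝟙_ C) ≫ G.map (ρ_ X).hom = (ρ_ (G.obj X)).hom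
  δ_monoidal : ∀ X Y : C,
      G₂ X Y ≫ δ (X ⊗ Y) =
        (δ X ⊗ₘ δ Y) ≫ G₂ (G.obj X) (G.obj Y) ≫ G.map (G₂ X Y)
  δ_monoidal_unit : G₀ ≫ δ (𝟙_ C) = G₀ ≫ G.map G₀
  ε_monoidal : ∀ X Y : C, G₂ X Y ≫ ε (X ⊗ Y) = (ε X ⊗ₘ ε Y)
  ε_monoidal_unit : G₀ ≫ ε (𝟙_ C) = 𝟙 (𝟙_ C)

namespace MonoidalComonad

variable {C} (M : MonoidalComonad C)

/-- The cowarping map `v = G₂ ∘ (1 ⊗ δ) : GX ⊗ GY ⟶ G(X ⊗ GY)` induced by a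
monoidal comonad. -/
def v (X Y : C) : M.G.obj X ⊗ M.G.obj Y ⟶ M.G.obj (X ⊗ M.G.obj Y) :=
  (M.G.obj X ◁ M.δ Y) ≫ M.G₂ X (M.G.obj Y)

/-- A braiding on the monoidal comonad `M`, i.e. a braiding on the associated
skew cowarping: a natural isomorphism `y : GX⊗GY ≅ GY⊗GX` satisfying
equations (1), (1a), (1b) and (funny). -/
structure Braiding where
  y : ∀ X Y : C, M.G.obj X ⊗ M.G.obj Y ≅ M.G.obj Y ⊗ M.G.obj X
  natural : ∀ {X X' Y Y' : C} (f : X ⟶ X') (g : Y ⟶ Y'),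
      (M.G.map f ⊗ₘ M.G.map g) ≫ (y X' Y').hom =
        (y X Y).hom ≫ (M.G.map g ⊗ₘ M.G.map f)
  yang_baxter : ∀ X Y Z : C,
      ((y X Y).hom ▷ M.G.obj Z) ≫ (α_ _ _ _).hom ≫ (M.G.obj Y ◁ (y X Z).hom) ≫
          (α_ _ _ _).inv ≫ ((y Y Z).hom ▷ M.G.obj X) =
        (α_ _ _ _).hom ≫ (M.G.obj X ◁ (y Y Z).hom) ≫ (α_ _ _ _).inv ≫
          ((y X Z).hom ▷ M.G.obj Y) ≫ (α_ _ _ _).hom ≫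
            (M.G.obj Z ◁ (y X Y).hom) ≫ (α_ _ _ _).inv
  hex_a : ∀ X Y Z : C,
      ((y X Y).hom ▷ M.G.obj Z) ≫ (α_ _ _ _).hom ≫ (M.G.obj Y ◁ (y X Z).hom) ≫
          (α_ _ _ _).inv ≫ (M.v Y Z ▷ M.G.obj X) =
        (α_ _ _ _).hom ≫ (M.G.obj X ◁ M.v Y Z) ≫ (y X (Y ⊗ M.G.obj Z)).hom
  hex_b : ∀ X Y Z : C,
      (α_ _ _ _).hom ≫ (M.G.obj X ◁ (y Y Z).hom) ≫ (α_ _ _ _).inv ≫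
          ((y X Z).hom ▷ M.G.obj Y) ≫ (α_ _ _ _).hom ≫ (M.G.obj Z ◁ M.v X Y) =
        (M.v X Y ▷ M.G.obj Z) ≫ (y (X ⊗ M.G.obj Y) Z).hom
  funny : ∀ X Y Z : C,
      (M.v X Y ▷ M.G.obj Z) ≫ M.v (X ⊗ M.G.obj Y) Z ≫
          M.G.map ((α_ X (M.G.obj Y) (M.G.obj Z)).hom ≫ (X ◁ (y Y Z).hom) ≫
            (α_ X (M.G.obj Z) (M.G.obj Y)).inv) =
        (α_ _ _ _).hom ≫ (M.G.obj X ◁ (y Y Z).hom) ≫ (α_ _ _ _).inv ≫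
          (M.v X Z ▷ M.G.obj Y) ≫ M.v (X ⊗ M.G.obj Z) Y

/-- A `G`-coalgebra for the comonad underlying `M`. -/
structure Coalg where
  A : C
  str : A ⟶ M.G.obj A
  counit : str ≫ M.ε A = 𝟙 A
  coassoc : str ≫ M.δ A = str ≫ M.G.map str

/-- A morphism `f : M.A ⟶ N.A` in `C` is a coalgebra morphism. -/
def IsCoalgHom (P Q : M.Coalg) (f : P.A ⟶ Q.A) : Prop :=
  P.str ≫ M.G.map f = f ≫ Q.str

/-- The structure map of the tensor product of two coalgebras
(for the lifted monoidal structure on `C^G`). -/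
def tensorStr (P Q : M.Coalg) : P.A ⊗ Q.A ⟶ M.G.obj (P.A ⊗ Q.A) :=
  (P.str ⊗ₘ Q.str) ≫ M.G₂ P.A Q.A

/-- The cofree coalgebra on an object `X`. -/
def cofree (X : C) : M.Coalg :=
  { A := M.G.obj X
    str := M.δ X
    counit := M.counit_left X
    coassoc := M.coassoc X }

end MonoidalComonad

namespace MonoidalComonad

variable {C} {M : MonoidalComonad C} (b : M.Braiding)

theorem y_natL {X X' : C} (f : X ⟶ X') (Z : C) :
    (M.G.map f ▷ M.G.obj Z) ≫ (b.y X' Z).hom =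
      (b.y X Z).hom ≫ (M.G.obj Z ◁ M.G.map f) := by
  simpa [tensorHom_id, id_tensorHom] using b.natural f (𝟙 Z)

theorem y_natR {Z Z' : C} (g : Z ⟶ Z') (X : C) :
    (M.G.obj X ◁ M.G.map g) ≫ (b.y X Z').hom =
      (b.y X Z).hom ≫ (M.G.map g ▷ M.G.obj X) := by
  simpa [tensorHom_id, id_tensorHom] using b.natural (𝟙 X) g

theorem v_eps (X Y : C) : M.v X Y ≫ M.G.map (X ◁ M.ε Y) = M.G₂ X Y := by
  have h := M.G₂_natural (𝟙 X) (M.ε Y)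
  simp only [CategoryTheory.Functor.map_id, id_tensorHom] at h
  rw [v, Category.assoc, ← h, ← MonoidalCategory.whiskerLeft_comp_assoc,
    M.counit_right, MonoidalCategory.whiskerLeft_id, Category.id_comp]

theorem G₂_left_unit' (X : C) :
    (M.G₀ ▷ M.G.obj X) ≫ M.G₂ (𝟙_ C) X =
      (λ_ (M.G.obj X)).hom ≫ M.G.map (λ_ X).inv := by
  rw [← cancel_mono (M.G.map (λ_ X).hom)]
  simpa only [Category.assoc, ← CategoryTheory.Functor.map_comp, Iso.inv_hom_id,
    CategoryTheory.Functor.map_id, Category.comp_id] using M.lax_left_unit X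

theorem G₂_right_unit' (X : C) :
    (M.G.obj X ◁ M.G₀) ≫ M.G₂ X (𝟙_ C) =
      (ρ_ (M.G.obj X)).hom ≫ M.G.map (ρ_ X).inv := by
  rw [← cancel_mono (M.G.map (ρ_ X).hom)]
  simpa only [Category.assoc, ← CategoryTheory.Functor.map_comp, Iso.inv_hom_id,
    CategoryTheory.Functor.map_id, Category.comp_id] using M.lax_right_unit X

theorem v_unit_left (Y : C) :
    (M.G₀ ▷ M.G.obj Y) ≫ M.v (𝟙_ C) Y =
      (λ_ (M.G.obj Y)).hom ≫ M.δ Y ≫ M.G.map (λ_ (M.G.obj Y)).inv := by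
  rw [v, ← whisker_exchange_assoc, G₂_left_unit', leftUnitor_naturality_assoc]

theorem hexB' (X Y Z : C) :
    (α_ _ _ _).hom ≫ (M.G.obj X ◁ (b.y Y Z).hom) ≫ (α_ _ _ _).inv ≫
        ((b.y X Z).hom ▷ M.G.obj Y) ≫ (α_ _ _ _).hom ≫ (M.G.obj Z ◁ M.G₂ X Y) =
      (M.G₂ X Y ▷ M.G.obj Z) ≫ (b.y (X ⊗ Y) Z).hom := by
  have h2 := congrArg (fun t => t ≫ (M.G.obj Z ◁ M.G.map (X ◁ M.ε Y))) (b.hex_b X Y Z)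
  simp only [Category.assoc] at h2
  rw [← MonoidalCategory.whiskerLeft_comp, v_eps] at h2
  rw [← y_natL b (X ◁ M.ε Y) Z, ← comp_whiskerRight_assoc, v_eps] at h2
  exact h2

theorem hexA' (X Y Z : C) :
    ((b.y X Y).hom ▷ M.G.obj Z) ≫ (α_ _ _ _).hom ≫ (M.G.obj Y ◁ (b.y X Z).hom) ≫
        (α_ _ _ _).inv ≫ (M.G₂ Y Z ▷ M.G.obj X) =
      (α_ _ _ _).hom ≫ (M.G.obj X ◁ M.G₂ Y Z) ≫ (b.y X (Y ⊗ Z)).hom := by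
  have h2 := congrArg (fun t => t ≫ (M.G.map (Y ◁ M.ε Z) ▷ M.G.obj X)) (b.hex_a X Y Z)
  simp only [Category.assoc] at h2
  rw [← comp_whiskerRight, v_eps] at h2
  rw [← y_natR b (Y ◁ M.ε Z) X, ← MonoidalCategory.whiskerLeft_comp_assoc, v_eps] at h2
  exact h2

theorem psi (Z W : C) :
    (((λ_ (M.G.obj Z)).inv ≫ (M.G₀ ▷ M.G.obj Z) ≫ (b.y (𝟙_ C) Z).hom) ▷ M.G.obj W) ≫
        (α_ _ _ _).hom ≫ (M.G.obj Z ◁ M.G₂ (𝟙_ C) W) =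
      M.G.obj Z ◁ M.G.map (λ_ W).inv := by
  have h2 := congrArg (fun t => ((M.G₀ ▷ M.G.obj W) ▷ M.G.obj Z) ≫ t)
    (hexB' b (𝟙_ C) W Z)
  rw [← comp_whiskerRight_assoc (M.G₀ ▷ M.G.obj W) (M.G₂ (𝟙_ C) W), G₂_left_unit',
    comp_whiskerRight, Category.assoc, y_natL b (λ_ W).inv Z] at h2
  rw [associator_naturality_left_assoc, ← whisker_exchange_assoc,
    associator_inv_naturality_left_assoc] at h2
  have key : (α_ (𝟙_ C) (M.G.obj W) (M.G.obj Z)).hom ≫ (𝟙_ C ◁ (b.y W Z).hom) ≫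
      (α_ (𝟙_ C) (M.G.obj Z) (M.G.obj W)).inv =
      ((λ_ (M.G.obj W)).hom ▷ M.G.obj Z) ≫ (b.y W Z).hom ≫
        ((λ_ (M.G.obj Z)).inv ▷ M.G.obj W) := by monoidal
  have keyr := reassoc_of% key
  rw [keyr] at h2
  rw [cancel_epi ((λ_ (M.G.obj W)).hom ▷ M.G.obj Z), cancel_epi ((b.y W Z).hom)] at h2
  simp only [comp_whiskerRight, Category.assoc]
  exact h2

theorem unit_S (Z : C) :
    (M.G₀ ▷ M.G.obj Z) ≫ (b.y (𝟙_ C) Z).hom =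
      (λ_ (M.G.obj Z)).hom ≫ (ρ_ (M.G.obj Z)).inv ≫ (M.G.obj Z ◁ M.G₀) := by
  have h2 := congrArg (fun t => (M.G.obj Z ◁ M.G₀) ≫ t) (psi b Z (𝟙_ C))
  rw [whisker_exchange_assoc, associator_naturality_right_assoc,
    ← MonoidalCategory.whiskerLeft_comp (M.G.obj Z), G₂_right_unit',
    ← MonoidalCategory.whiskerLeft_comp (M.G.obj Z)] at h2
  have key : ((((λ_ (M.G.obj Z)).inv ≫ (M.G₀ ▷ M.G.obj Z) ≫ (b.y (𝟙_ C) Z).hom)) ▷ 𝟙_ C) ≫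
      (α_ (M.G.obj Z) (M.G.obj (𝟙_ C)) (𝟙_ C)).hom ≫
        (M.G.obj Z ◁ ((ρ_ (M.G.obj (𝟙_ C))).hom ≫ M.G.map (ρ_ (𝟙_ C)).inv)) =
      (ρ_ (M.G.obj Z)).hom ≫ ((λ_ (M.G.obj Z)).inv ≫ (M.G₀ ▷ M.G.obj Z) ≫
        (b.y (𝟙_ C) Z).hom) ≫ (M.G.obj Z ◁ M.G.map (ρ_ (𝟙_ C)).inv) := by monoidal
  rw [key] at h2
  have h3 := congrArg (fun t => (ρ_ (M.G.obj Z)).inv ≫ t ≫ (M.G.obj Z ◁ M.G.map (ρ_ (𝟙_ C)).hom)) h2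
  simp only [Category.assoc, Iso.inv_hom_id_assoc,
    ← MonoidalCategory.whiskerLeft_comp, ← CategoryTheory.Functor.map_comp,
    Iso.inv_hom_id, CategoryTheory.Functor.map_id, MonoidalCategory.whiskerLeft_id,
    Category.comp_id] at h3
  -- h3 : (λ_ GZ).inv ≫ (G₀ ▷ GZ) ≫ y = (ρ_GZ).inv ≫ GZ ◁ (G₀ ≫ G.map (λ_𝟙).inv ≫ G.map (ρ_𝟙).hom)
  have hu : M.G.map ((λ_ (𝟙_ C)).inv ≫ (ρ_ (𝟙_ C)).hom) = 𝟙 (M.G.obj (𝟙_ C)) := by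
    rw [← unitors_equal, Iso.inv_hom_id, CategoryTheory.Functor.map_id]
  rw [hu, Category.comp_id] at h3
  rw [Iso.inv_comp_eq] at h3
  simpa only [Category.assoc] using h3

theorem psi' (X Y : C) :
    (M.G.obj Y ◁ ((ρ_ (M.G.obj X)).inv ≫ (M.G.obj X ◁ M.G₀) ≫ (b.y X (𝟙_ C)).hom)) ≫
        (α_ _ _ _).inv ≫ (M.G₂ Y (𝟙_ C) ▷ M.G.obj X) =
      M.G.map (ρ_ Y).inv ▷ M.G.obj X := by
  have h2 := congrArg (fun t => ((M.G.obj X ⊗ M.G.obj Y) ◁ M.G₀) ≫ t)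
    (hexA' b X Y (𝟙_ C))
  rw [associator_naturality_right_assoc,
    ← MonoidalCategory.whiskerLeft_comp_assoc (M.G.obj X), G₂_right_unit',
    MonoidalCategory.whiskerLeft_comp, Category.assoc, y_natR b (ρ_ Y).inv X] at h2
  rw [whisker_exchange_assoc, associator_naturality_right_assoc] at h2
  have hτ : (M.G.obj X ◁ M.G₀) ≫ (b.y X (𝟙_ C)).hom =
      (ρ_ (M.G.obj X)).hom ≫ ((ρ_ (M.G.obj X)).inv ≫ (M.G.obj X ◁ M.G₀) ≫
        (b.y X (𝟙_ C)).hom) := by simp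
  rw [← MonoidalCategory.whiskerLeft_comp_assoc (M.G.obj Y), hτ,
    MonoidalCategory.whiskerLeft_comp, Category.assoc,
    MonoidalCategory.whiskerLeft_comp, Category.assoc] at h2
  have key : ((b.y X Y).hom ▷ 𝟙_ C) ≫ (α_ (M.G.obj Y) (M.G.obj X) (𝟙_ C)).hom ≫
      (M.G.obj Y ◁ (ρ_ (M.G.obj X)).hom) =
      (α_ (M.G.obj X) (M.G.obj Y) (𝟙_ C)).hom ≫ (M.G.obj X ◁ (ρ_ (M.G.obj Y)).hom) ≫
        (b.y X Y).hom := by monoidal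
  have keyr := reassoc_of% key
  rw [keyr] at h2
  rw [cancel_epi ((α_ (M.G.obj X) (M.G.obj Y) (𝟙_ C)).hom),
    cancel_epi (M.G.obj X ◁ (ρ_ (M.G.obj Y)).hom), cancel_epi ((b.y X Y).hom)] at h2
  simp only [MonoidalCategory.whiskerLeft_comp, Category.assoc] at h2 ⊢
  exact h2

theorem unit_T (X : C) :
    (M.G.obj X ◁ M.G₀) ≫ (b.y X (𝟙_ C)).hom =
      (ρ_ (M.G.obj X)).hom ≫ (λ_ (M.G.obj X)).inv ≫ (M.G₀ ▷ M.G.obj X) := by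
  have h2 := congrArg (fun t => (M.G₀ ▷ M.G.obj X) ≫ t) (psi' b X (𝟙_ C))
  rw [← whisker_exchange_assoc, associator_inv_naturality_left_assoc,
    ← comp_whiskerRight (M.G₀ ▷ M.G.obj (𝟙_ C)) (M.G₂ (𝟙_ C) (𝟙_ C)),
    G₂_left_unit'] at h2
  have key : (𝟙_ C ◁ ((ρ_ (M.G.obj X)).inv ≫ (M.G.obj X ◁ M.G₀) ≫ (b.y X (𝟙_ C)).hom)) ≫
      (α_ (𝟙_ C) (M.G.obj (𝟙_ C)) (M.G.obj X)).inv ≫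
        ((λ_ (M.G.obj (𝟙_ C))).hom ▷ M.G.obj X) =
      (λ_ (M.G.obj X)).hom ≫ ((ρ_ (M.G.obj X)).inv ≫ (M.G.obj X ◁ M.G₀) ≫
        (b.y X (𝟙_ C)).hom) := by monoidal
  have keyr := reassoc_of% key
  rw [comp_whiskerRight] at h2
  rw [keyr] at h2
  have h3 := congrArg (fun t => t ≫ (M.G.map (λ_ (𝟙_ C)).hom ▷ M.G.obj X)) h2
  simp only [Category.assoc, ← comp_whiskerRight,
    ← CategoryTheory.Functor.map_comp, Iso.inv_hom_id,
    CategoryTheory.Functor.map_id, Category.comp_id] at h3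
  have hu : (ρ_ (𝟙_ C)).inv ≫ (λ_ (𝟙_ C)).hom = 𝟙 (𝟙_ C) := by
    rw [unitors_equal, Iso.inv_hom_id]
  rw [hu, CategoryTheory.Functor.map_id, Category.comp_id] at h3
  rw [← h3]
  simp

theorem sq1 (Y Z : C) :
    (b.y Y Z).hom ≫ (M.G.obj Z ◁ M.δ Y) =
      (M.δ Y ▷ M.G.obj Z) ≫ (b.y (M.G.obj Y) Z).hom := by
  have h2 := congrArg (fun t => ((M.G₀ ▷ M.G.obj Y) ▷ M.G.obj Z) ≫ t)
    (b.hex_b (𝟙_ C) Y Z)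
  -- right hand side
  rw [← comp_whiskerRight_assoc (M.G₀ ▷ M.G.obj Y) (M.v (𝟙_ C) Y), v_unit_left,
    comp_whiskerRight, comp_whiskerRight, Category.assoc, Category.assoc,
    y_natL b (λ_ (M.G.obj Y)).inv Z] at h2
  -- left hand side
  rw [associator_naturality_left_assoc, ← whisker_exchange_assoc,
    associator_inv_naturality_left_assoc,
    ← comp_whiskerRight_assoc (M.G₀ ▷ M.G.obj Z) ((b.y (𝟙_ C) Z).hom), unit_S,
    comp_whiskerRight, comp_whiskerRight, Category.assoc, Category.assoc,
    associator_naturality_middle_assoc,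
    ← MonoidalCategory.whiskerLeft_comp (M.G.obj Z), v_unit_left,
    MonoidalCategory.whiskerLeft_comp, MonoidalCategory.whiskerLeft_comp] at h2
  try simp only [Category.assoc] at h2
  have key : (α_ (𝟙_ C) (M.G.obj Y) (M.G.obj Z)).hom ≫ (𝟙_ C ◁ (b.y Y Z).hom) ≫
      (α_ (𝟙_ C) (M.G.obj Z) (M.G.obj Y)).inv ≫ ((λ_ (M.G.obj Z)).hom ▷ M.G.obj Y) ≫
        ((ρ_ (M.G.obj Z)).inv ▷ M.G.obj Y) ≫ (α_ (M.G.obj Z) (𝟙_ C) (M.G.obj Y)).hom ≫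
          (M.G.obj Z ◁ (λ_ (M.G.obj Y)).hom) =
      ((λ_ (M.G.obj Y)).hom ▷ M.G.obj Z) ≫ (b.y Y Z).hom := by monoidal
  have keyr := reassoc_of% key
  rw [keyr] at h2
  rw [cancel_epi ((λ_ (M.G.obj Y)).hom ▷ M.G.obj Z)] at h2
  have h3 := congrArg (fun t => t ≫ (M.G.obj Z ◁ M.G.map (λ_ (M.G.obj Y)).hom)) h2
  simp only [Category.assoc, ← MonoidalCategory.whiskerLeft_comp,
    ← CategoryTheory.Functor.map_comp, Iso.inv_hom_id,
    CategoryTheory.Functor.map_id, MonoidalCategory.whiskerLeft_id,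
    Category.comp_id] at h3
  exact h3

theorem sq2 (X Z : C) :
    (b.y X Z).hom ≫ (M.δ Z ▷ M.G.obj X) =
      (M.G.obj X ◁ M.δ Z) ≫ (b.y X (M.G.obj Z)).hom := by
  have h2 := congrArg (fun t => ((M.G.obj X ◁ M.G₀) ▷ M.G.obj Z) ≫ t)
    (b.hex_a X (𝟙_ C) Z)
  -- left hand side
  rw [← comp_whiskerRight_assoc (M.G.obj X ◁ M.G₀) ((b.y X (𝟙_ C)).hom), unit_T,
    comp_whiskerRight, comp_whiskerRight, Category.assoc, Category.assoc,
    associator_naturality_left_assoc, ← whisker_exchange_assoc,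
    associator_inv_naturality_left_assoc,
    ← comp_whiskerRight (M.G₀ ▷ M.G.obj Z) (M.v (𝟙_ C) Z), v_unit_left,
    comp_whiskerRight, comp_whiskerRight] at h2
  try simp only [Category.assoc] at h2
  -- right hand side
  rw [associator_naturality_middle_assoc,
    ← MonoidalCategory.whiskerLeft_comp_assoc (M.G.obj X), v_unit_left,
    MonoidalCategory.whiskerLeft_comp, MonoidalCategory.whiskerLeft_comp,
    Category.assoc, Category.assoc, y_natR b (λ_ (M.G.obj Z)).inv X] at h2
  have key : ((λ_ (M.G.obj X)).inv ▷ M.G.obj Z) ≫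
      (α_ (𝟙_ C) (M.G.obj X) (M.G.obj Z)).hom ≫ (𝟙_ C ◁ (b.y X Z).hom) ≫
        (α_ (𝟙_ C) (M.G.obj Z) (M.G.obj X)).inv ≫ ((λ_ (M.G.obj Z)).hom ▷ M.G.obj X) =
      (b.y X Z).hom := by monoidal
  have keyr := reassoc_of% key
  rw [keyr] at h2
  have key2 : (α_ (M.G.obj X) (𝟙_ C) (M.G.obj Z)).hom ≫ (M.G.obj X ◁ (λ_ (M.G.obj Z)).hom) =
      (ρ_ (M.G.obj X)).hom ▷ M.G.obj Z := by monoidal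
  have key2r := reassoc_of% key2
  rw [key2r] at h2
  rw [cancel_epi ((ρ_ (M.G.obj X)).hom ▷ M.G.obj Z)] at h2
  have h3 := congrArg (fun t => t ≫ (M.G.map (λ_ (M.G.obj Z)).hom ▷ M.G.obj X)) h2
  simp only [Category.assoc, ← comp_whiskerRight,
    ← CategoryTheory.Functor.map_comp, Iso.inv_hom_id,
    CategoryTheory.Functor.map_id, MonoidalCategory.id_whiskerRight,
    Category.comp_id] at h3
  exact h3


end MonoidalComonad

/-- if `y` is a braiding on the monoidal comonad `G`, then
`(1 ⊗ δ) ∘ y = y ∘ (δ ⊗ 1)` as maps `GX ⊗ GZ ⟶ GZ ⊗ G²X`, and consequently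
`y ∘ (δ ⊗ δ) = (δ ⊗ δ) ∘ y` as maps `GX ⊗ GZ ⟶ G²Z ⊗ G²X`. -/
theorem stmt15 {C : Type u} [Category.{v} C] [MonoidalCategory C]
    (M : MonoidalComonad C) (b : M.Braiding) :
    (∀ X Z : C,
      (b.y X Z).hom ≫ (M.G.obj Z ◁ M.δ X) =
        (M.δ X ▷ M.G.obj Z) ≫ (b.y (M.G.obj X) Z).hom) ∧
    (∀ X Z : C,
      (M.δ X ⊗ₘ M.δ Z) ≫ (b.y (M.G.obj X) (M.G.obj Z)).hom =
        (b.y X Z).hom ≫ (M.δ Z ⊗ₘ M.δ X)) := by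
  constructor
  · intro X Z
    exact MonoidalComonad.sq1 b X Z
  · intro X Z
    have h1 := MonoidalComonad.sq1 b X Z
    have h2 := MonoidalComonad.sq2 b (M.G.obj X) Z
    calc (M.δ X ⊗ₘ M.δ Z) ≫ (b.y (M.G.obj X) (M.G.obj Z)).hom
        = (M.δ X ▷ M.G.obj Z) ≫ (M.G.obj (M.G.obj X) ◁ M.δ Z) ≫
            (b.y (M.G.obj X) (M.G.obj Z)).hom := by
          rw [tensorHom_def_assoc]
      _ = (M.δ X ▷ M.G.obj Z) ≫ (b.y (M.G.obj X) Z).hom ≫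
            (M.δ Z ▷ M.G.obj (M.G.obj X)) := by rw [← h2]
      _ = (b.y X Z).hom ≫ (M.G.obj Z ◁ M.δ X) ≫
            (M.δ Z ▷ M.G.obj (M.G.obj X)) := by
          rw [← Category.assoc, ← h1, Category.assoc]
      _ = (b.y X Z).hom ≫ (M.δ Z ⊗ₘ M.δ X) := by rw [← tensorHom_def']
end

section
/- Let B be a bialgebra over a commutative ring R whose underlying algebra is not commutative. Then on the cowarped skew monoidal category R-Mod[B] (tensor X⋆Y = X⊗B⊗Y), the natural isomorphisms X⊗B⊗Y⊗B⊗Z ≅ X⊗B⊗Z⊗B⊗Y induced by the symmetry of R-Mod swapping the factors B⊗Y and B⊗Z satisfy axioms (S2), (S3a), (S3b) and the symmetry axiom, but satisfy axiom (S*) if and only if B is commutative. In particular axiom (S*) is independent of the other braiding axioms. -/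
open CategoryTheory MonoidalCategory TensorProduct

universe u

namespace ModRB

variable (R : Type u) [CommRing R] (B : Type u) [Ring B] [Bialgebra R B]

/-- `B` as an object of `R-Mod`. -/
noncomputable abbrev Bc : ModuleCat R := ModuleCat.of R B

/-- Comultiplication of `B` as a morphism of `R-Mod`. -/
noncomputable def comulH : Bc R B ⟶ Bc R B ⊗ Bc R B :=
  ModuleCat.ofHom (Coalgebra.comul (R := R) (A := B))

/-- Multiplication of `B` as a morphism of `R-Mod`. -/
noncomputable def mulH : Bc R B ⊗ Bc R B ⟶ Bc R B :=
  ModuleCat.ofHom (LinearMap.mul' R B)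

/-- Counit of `B` as a morphism of `R-Mod`. -/
noncomputable def counitH : Bc R B ⟶ 𝟙_ (ModuleCat R) :=
  ModuleCat.ofHom (Coalgebra.counit (R := R) (A := B))

/-- Unit of `B` as a morphism of `R-Mod`. -/
noncomputable def unitH : 𝟙_ (ModuleCat R) ⟶ Bc R B :=
  ModuleCat.ofHom (Algebra.linearMap R B)

/-- The tensor product `X ⋆ Y = X ⊗ B ⊗ Y` of the skew monoidal category
`R-Mod[B]`. -/
noncomputable def star (X Y : ModuleCat R) : ModuleCat R := X ⊗ (Bc R B ⊗ Y)

/-- The action of `⋆` on morphisms. -/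
noncomputable def starHom {X X' Y Y' : ModuleCat R} (f : X ⟶ X') (g : Y ⟶ Y') :
    star R B X Y ⟶ star R B X' Y' := f ⊗ₘ (Bc R B ◁ g)

/-- The cofree comodule structure `B ⊗ X ⟶ B ⊗ (B ⊗ X)`. -/
noncomputable def δH (X : ModuleCat R) :
    Bc R B ⊗ X ⟶ Bc R B ⊗ (Bc R B ⊗ X) :=
  (comulH R B ▷ X) ≫ (α_ (Bc R B) (Bc R B) X).hom

/-- The lax monoidal structure `G₂ : (B⊗X) ⊗ (B⊗Y) ⟶ B ⊗ (X⊗Y)` of the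
monoidal comonad `B ⊗ −`, given by the middle swap followed by
multiplication. -/
noncomputable def G2 (X Y : ModuleCat R) :
    (Bc R B ⊗ X) ⊗ (Bc R B ⊗ Y) ⟶ Bc R B ⊗ (X ⊗ Y) :=
  (α_ (Bc R B) X (Bc R B ⊗ Y)).hom ≫
    (Bc R B ◁ ((α_ X (Bc R B) Y).inv ≫ ((β_ X (Bc R B)).hom ▷ Y) ≫
      (α_ (Bc R B) X Y).hom)) ≫
    (α_ (Bc R B) (Bc R B) (X ⊗ Y)).inv ≫ (mulH R B ▷ (X ⊗ Y))

/-- The cowarping map `v = G₂ ∘ (1 ⊗ δ)`. -/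
noncomputable def vH (X Y : ModuleCat R) :
    (Bc R B ⊗ X) ⊗ (Bc R B ⊗ Y) ⟶ Bc R B ⊗ (X ⊗ (Bc R B ⊗ Y)) :=
  ((Bc R B ⊗ X) ◁ δH R B Y) ≫ G2 R B X (Bc R B ⊗ Y)

/-- The associator of `R-Mod[B]`. -/
noncomputable def sAssoc (X Y Z : ModuleCat R) :
    star R B (star R B X Y) Z ⟶ star R B X (star R B Y Z) :=
  (α_ X (Bc R B ⊗ Y) (Bc R B ⊗ Z)).hom ≫ (X ◁ vH R B Y Z)

/-- The left unit of `R-Mod[B]`. -/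
noncomputable def sL (X : ModuleCat R) : star R B (𝟙_ (ModuleCat R)) X ⟶ X :=
  (λ_ (Bc R B ⊗ X)).hom ≫ (counitH R B ▷ X) ≫ (λ_ X).hom

/-- The right unit of `R-Mod[B]`. -/
noncomputable def sR (X : ModuleCat R) : X ⟶ star R B X (𝟙_ (ModuleCat R)) :=
  (ρ_ X).inv ≫ (X ◁ ((λ_ (𝟙_ (ModuleCat R))).inv ≫ (unitH R B ▷ 𝟙_ (ModuleCat R))))

section Axioms

variable {R B}
variable (s : ∀ X A Y : ModuleCat R, star R B (star R B X A) Y ⟶ star R B (star R B X Y) A)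

/-- Naturality of a family `s : (X⋆A)⋆Y ⟶ (X⋆Y)⋆A`. -/
def SNat : Prop :=
  ∀ {X X' A A' Y Y' : ModuleCat R} (f : X ⟶ X') (g : A ⟶ A') (h : Y ⟶ Y'),
    starHom R B (starHom R B f g) h ≫ s X' A' Y' =
      s X A Y ≫ starHom R B (starHom R B f h) g

/-- Axiom (S2) for `R-Mod[B]`. -/
def S2 : Prop :=
  ∀ X A Y Z : ModuleCat R,
    s (star R B X A) Y Z ≫ starHom R B (s X A Z) (𝟙 Y) ≫ s (star R B X Z) A Y =
      starHom R B (s X A Y) (𝟙 Z) ≫ s (star R B X Y) A Z ≫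
        starHom R B (s X Y Z) (𝟙 A)

/-- Axiom (S3a) for `R-Mod[B]`. -/
def S3a : Prop :=
  ∀ X A Y Z : ModuleCat R,
    starHom R B (s X A Y) (𝟙 Z) ≫ s (star R B X Y) A Z ≫
        starHom R B (sAssoc R B X Y Z) (𝟙 A) =
      sAssoc R B (star R B X A) Y Z ≫ s X A (star R B Y Z)

/-- Axiom (S3b) for `R-Mod[B]`. -/
def S3b : Prop :=
  ∀ X A Y Z : ModuleCat R,
    s (star R B X A) Y Z ≫ starHom R B (s X A Z) (𝟙 Y) ≫
        sAssoc R B (star R B X Z) A Y =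
      starHom R B (sAssoc R B X A Y) (𝟙 Z) ≫ s X (star R B A Y) Z

/-- Axiom (S*) for `R-Mod[B]`. -/
def Sstar : Prop :=
  ∀ X A Y Z : ModuleCat R,
    starHom R B (sAssoc R B X A Y) (𝟙 Z) ≫ sAssoc R B X (star R B A Y) Z ≫
        starHom R B (𝟙 X) (s A Y Z) =
      s (star R B X A) Y Z ≫ starHom R B (sAssoc R B X A Z) (𝟙 Y) ≫
        sAssoc R B X (star R B A Z) Y

/-- The symmetry axiom for `R-Mod[B]`. -/
def Symm : Prop :=
  ∀ X A Y : ModuleCat R, s X A Y ≫ s X Y A = 𝟙 (star R B (star R B X A) Y)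

end Axioms

variable {R B} in
/-- A braiding on the skew monoidal category `R-Mod[B]`. -/
structure SkewBraiding where
  s : ∀ X A Y : ModuleCat R, star R B (star R B X A) Y ⟶ star R B (star R B X Y) A
  iso : ∀ X A Y : ModuleCat R, IsIso (s X A Y)
  natural : SNat (B := B) s
  ax2 : S2 (B := B) s
  ax3a : S3a (B := B) s
  ax3b : S3b (B := B) s
  axstar : Sstar (B := B) s

/-- Comultiplication on `B ⊗[R] B`. -/
noncomputable def comul₂ : B ⊗[R] B →ₗ[R] (B ⊗[R] B) ⊗[R] (B ⊗[R] B) :=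
  Coalgebra.comul

/-- Convolution product of linear forms on the coalgebra `B ⊗[R] B`. -/
noncomputable def conv (f g : B ⊗[R] B →ₗ[R] R) : B ⊗[R] B →ₗ[R] R :=
  LinearMap.mul' R R ∘ₗ TensorProduct.map f g ∘ₗ comul₂ R B

variable {R B} in
/-- A cobraiding (coquasitriangular structure) on the bialgebra `B`:
a convolution-invertible linear form `γ : B ⊗ B → R` intertwining the
multiplication and the opposite multiplication, and satisfying the two
hexagon-type conditions. -/
structure Cobraiding where
  γ : B ⊗[R] B →ₗ[R] R
  conv_inv : ∃ γ' : B ⊗[R] B →ₗ[R] R,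
    conv R B γ γ' = Coalgebra.counit ∧ conv R B γ' γ = Coalgebra.counit
  mul_compat :
    (TensorProduct.lid R B).toLinearMap ∘ₗ
        TensorProduct.map γ (LinearMap.mul' R B) ∘ₗ comul₂ R B =
      (TensorProduct.rid R B).toLinearMap ∘ₗ
        TensorProduct.map
          (LinearMap.mul' R B ∘ₗ (TensorProduct.comm R B B).toLinearMap) γ ∘ₗ
        comul₂ R B
  hex_left :
    γ ∘ₗ TensorProduct.map (LinearMap.mul' R B) LinearMap.id =
      LinearMap.mul' R R ∘ₗ TensorProduct.map γ γ ∘ₗ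
        (TensorProduct.tensorTensorTensorComm R B B B B).toLinearMap ∘ₗ
        TensorProduct.map LinearMap.id (Coalgebra.comul (R := R) (A := B))
  hex_right :
    γ ∘ₗ TensorProduct.map LinearMap.id (LinearMap.mul' R B) =
      LinearMap.mul' R R ∘ₗ TensorProduct.map γ γ ∘ₗ
        (TensorProduct.tensorTensorTensorComm R B B B B).toLinearMap ∘ₗ
        TensorProduct.map (Coalgebra.comul (R := R) (A := B))
          (TensorProduct.comm R B B).toLinearMap

end ModRB

namespace ModRB

variable (R : Type u) [CommRing R] (B : Type u) [Ring B] [Bialgebra R B]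

/-- The candidate braiding on `R-Mod[B]` induced by the symmetry of `R-Mod`
swapping the factors `B ⊗ A` and `B ⊗ Y`. -/
noncomputable def swapS (X A Y : ModuleCat R) :
    star R B (star R B X A) Y ⟶ star R B (star R B X Y) A :=
  (α_ X (Bc R B ⊗ A) (Bc R B ⊗ Y)).hom ≫
    (X ◁ (β_ (Bc R B ⊗ A) (Bc R B ⊗ Y)).hom) ≫
    (α_ X (Bc R B ⊗ Y) (Bc R B ⊗ A)).inv

section Aux
open ModuleCat

variable {R B}

lemma ext3 {X A Y W : ModuleCat R} (f g : star R B (star R B X A) Y ⟶ W)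
    (h : ∀ (x : X) (b : B) (a : A) (c : B) (y : Y),
      f ((x ⊗ₜ (b ⊗ₜ a)) ⊗ₜ (c ⊗ₜ y)) = g ((x ⊗ₜ (b ⊗ₜ a)) ⊗ₜ (c ⊗ₜ y))) : f = g := by
  obtain ⟨f', rfl⟩ : ∃ f' : (X ⊗ (Bc R B ⊗ A)) ⊗ (Bc R B ⊗ Y) ⟶ W, f' = f := ⟨f, rfl⟩
  obtain ⟨g', rfl⟩ : ∃ g' : (X ⊗ (Bc R B ⊗ A)) ⊗ (Bc R B ⊗ Y) ⟶ W, g' = g := ⟨g, rfl⟩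
  show @Eq ((X ⊗ (Bc R B ⊗ A)) ⊗ (Bc R B ⊗ Y) ⟶ W) f' g'
  apply ModuleCat.hom_ext
  apply TensorProduct.ext'
  intro p q
  induction p using TensorProduct.induction_on with
  | zero => simp
  | add a b ha hb => simp [add_tmul, ha, hb]
  | tmul x q1 =>
    induction q1 using TensorProduct.induction_on with
    | zero => simp [tmul_zero]
    | add a b ha hb => simp [tmul_add, add_tmul, ha, hb]
    | tmul b a =>
      induction q using TensorProduct.induction_on with
      | zero => simp
      | add u v hu hv => simp [tmul_add, hu, hv]
      | tmul c y => exact h x b a c y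

lemma ext4 {X A Y Z W : ModuleCat R}
    (f g : star R B (star R B (star R B X A) Y) Z ⟶ W)
    (h : ∀ (x : X) (b : B) (a : A) (c : B) (y : Y) (d : B) (z : Z),
      f (((x ⊗ₜ (b ⊗ₜ a)) ⊗ₜ (c ⊗ₜ y)) ⊗ₜ (d ⊗ₜ z)) =
      g (((x ⊗ₜ (b ⊗ₜ a)) ⊗ₜ (c ⊗ₜ y)) ⊗ₜ (d ⊗ₜ z))) : f = g := by
  obtain ⟨f', rfl⟩ : ∃ f' : ((X ⊗ (Bc R B ⊗ A)) ⊗ (Bc R B ⊗ Y)) ⊗ (Bc R B ⊗ Z) ⟶ W, f' = f :=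
    ⟨f, rfl⟩
  obtain ⟨g', rfl⟩ : ∃ g' : ((X ⊗ (Bc R B ⊗ A)) ⊗ (Bc R B ⊗ Y)) ⊗ (Bc R B ⊗ Z) ⟶ W, g' = g :=
    ⟨g, rfl⟩
  show @Eq (((X ⊗ (Bc R B ⊗ A)) ⊗ (Bc R B ⊗ Y)) ⊗ (Bc R B ⊗ Z) ⟶ W) f' g'
  apply ModuleCat.hom_ext
  apply TensorProduct.ext'
  intro p q
  induction q using TensorProduct.induction_on with
  | zero => simp [tmul_zero]
  | add u v hu hv => simp [tmul_add, hu, hv]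
  | tmul d z =>
    induction p using TensorProduct.induction_on with
    | zero => simp
    | add u v hu hv => simp [add_tmul, hu, hv]
    | tmul p1 q1 =>
      induction p1 using TensorProduct.induction_on with
      | zero => simp [add_tmul]
      | add u v hu hv => simp [add_tmul, hu, hv]
      | tmul x r1 =>
        induction r1 using TensorProduct.induction_on with
        | zero => simp [tmul_zero, zero_tmul, add_tmul]
        | add u v hu hv => simp [tmul_add, add_tmul, hu, hv]
        | tmul b a =>
          induction q1 using TensorProduct.induction_on with
          | zero => simp [tmul_zero, zero_tmul, add_tmul]
          | add u v hu hv => simp [tmul_add, add_tmul, hu, hv]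
          | tmul c y => exact h x b a c y d z

variable (R B)

@[simp] lemma swapS_tmul {X A Y : ModuleCat R} (x : X) (b : B) (a : A) (c : B) (y : Y) :
    swapS R B X A Y ((x ⊗ₜ (b ⊗ₜ a)) ⊗ₜ (c ⊗ₜ y)) = (x ⊗ₜ (c ⊗ₜ y)) ⊗ₜ (b ⊗ₜ a) := rfl

@[simp] lemma starHom_tmul {X X' Y Y' : ModuleCat R} (f : X ⟶ X') (g : Y ⟶ Y')
    (x : X) (b : B) (y : Y) :
    starHom R B f g (x ⊗ₜ (b ⊗ₜ y)) = f x ⊗ₜ (b ⊗ₜ g y) := rfl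

/-- Auxiliary bilinear packaging for `vH` on pure tensors. -/
noncomputable def vAux {Y Z : ModuleCat R} (b : B) (y : Y) (z : Z) :
    B ⊗[R] B →ₗ[R] (Bc R B ⊗ (Y ⊗ (Bc R B ⊗ Z)) : ModuleCat R) :=
  TensorProduct.map (LinearMap.mulLeft R b)
    ((TensorProduct.mk R Y (Bc R B ⊗ Z : ModuleCat R)) y ∘ₗ
      ((TensorProduct.mk R B Z).flip z))

@[simp] lemma vAux_tmul {Y Z : ModuleCat R} (b : B) (y : Y) (z : Z) (c₁ c₂ : B) :
    vAux R B b y z (c₁ ⊗ₜ c₂) = (b * c₁) ⊗ₜ (y ⊗ₜ (c₂ ⊗ₜ z)) := rfl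

lemma G2_assoc_tmul {Y Z : ModuleCat R} (b : B) (y : Y) (z : Z) (t : B ⊗[R] B) :
    G2 R B Y (Bc R B ⊗ Z) ((b ⊗ₜ y) ⊗ₜ ((α_ (Bc R B) (Bc R B) Z).hom (t ⊗ₜ z))) =
      vAux R B b y z t := by
  induction t using TensorProduct.induction_on with
  | zero => simp [tmul_zero]
  | add u v hu hv =>
      rw [add_tmul, map_add, tmul_add, map_add, hu, hv, map_add]
  | tmul c₁ c₂ => rfl

lemma vH_tmul {Y Z : ModuleCat R} (b : B) (y : Y) (c : B) (z : Z) :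
    vH R B Y Z ((b ⊗ₜ y) ⊗ₜ (c ⊗ₜ z)) = vAux R B b y z (Coalgebra.comul c) := by
  have : vH R B Y Z ((b ⊗ₜ y) ⊗ₜ (c ⊗ₜ z)) =
      G2 R B Y (Bc R B ⊗ Z)
        ((b ⊗ₜ y) ⊗ₜ ((α_ (Bc R B) (Bc R B) Z).hom
          ((Coalgebra.comul (R := R) (A := B) c) ⊗ₜ z))) := rfl
  rw [this, G2_assoc_tmul]

lemma sAssoc_tmul {X Y Z : ModuleCat R} (x : X) (b : B) (y : Y) (c : B) (z : Z) :
    sAssoc R B X Y Z ((x ⊗ₜ (b ⊗ₜ y)) ⊗ₜ (c ⊗ₜ z)) =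
      x ⊗ₜ vAux R B b y z (Coalgebra.comul c) := by
  have : sAssoc R B X Y Z ((x ⊗ₜ (b ⊗ₜ y)) ⊗ₜ (c ⊗ₜ z)) =
      x ⊗ₜ vH R B Y Z ((b ⊗ₜ y) ⊗ₜ (c ⊗ₜ z)) := rfl
  rw [this, vH_tmul]

end Aux

section Main
set_option maxHeartbeats 1000000
variable (R : Type u) [CommRing R] (B : Type u) [Ring B] [Bialgebra R B]

/-- Left-hand packaging map for axiom (S*). -/
noncomputable def ΦL {A Y Z : ModuleCat R} (b : B) (a : A) (y : Y) (z : Z) :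
    (B ⊗[R] B) ⊗[R] (B ⊗[R] B) →ₗ[R]
      (Bc R B ⊗ ((A ⊗ (Bc R B ⊗ Z)) ⊗ (Bc R B ⊗ Y)) : ModuleCat R) :=
  (TensorProduct.map
    ((LinearMap.mulLeft R b ∘ₗ LinearMap.mul' R B : B ⊗[R] B →ₗ[R] B))
    (TensorProduct.map
       ((TensorProduct.mk R A (Bc R B ⊗ Z : ModuleCat R)) a ∘ₗ
         (TensorProduct.mk R B Z).flip z)
       ((TensorProduct.mk R B Y).flip y)
     ∘ₗ (TensorProduct.comm R B B).toLinearMap))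
  ∘ₗ (TensorProduct.tensorTensorTensorComm R B B B B).toLinearMap

/-- Right-hand packaging map for axiom (S*). -/
noncomputable def ΦR {A Y Z : ModuleCat R} (b : B) (a : A) (y : Y) (z : Z) :
    (B ⊗[R] B) ⊗[R] (B ⊗[R] B) →ₗ[R]
      (Bc R B ⊗ ((A ⊗ (Bc R B ⊗ Z)) ⊗ (Bc R B ⊗ Y)) : ModuleCat R) :=
  (TensorProduct.map
    ((LinearMap.mulLeft R b ∘ₗ LinearMap.mul' R B ∘ₗ (TensorProduct.comm R B B).toLinearMap : B ⊗[R] B →ₗ[R] B))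
    (TensorProduct.map
       ((TensorProduct.mk R A (Bc R B ⊗ Z : ModuleCat R)) a ∘ₗ
         (TensorProduct.mk R B Z).flip z)
       ((TensorProduct.mk R B Y).flip y)
     ∘ₗ (TensorProduct.comm R B B).toLinearMap))
  ∘ₗ (TensorProduct.tensorTensorTensorComm R B B B B).toLinearMap

@[simp] lemma ΦL_tmul {A Y Z : ModuleCat R} (b : B) (a : A) (y : Y) (z : Z)
    (c₁ c₂ d₁ d₂ : B) :
    ΦL R B b a y z ((c₁ ⊗ₜ c₂) ⊗ₜ (d₁ ⊗ₜ d₂)) =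
      (b * (c₁ * d₁)) ⊗ₜ ((a ⊗ₜ (d₂ ⊗ₜ z)) ⊗ₜ (c₂ ⊗ₜ y)) := rfl

@[simp] lemma ΦR_tmul {A Y Z : ModuleCat R} (b : B) (a : A) (y : Y) (z : Z)
    (c₁ c₂ d₁ d₂ : B) :
    ΦR R B b a y z ((c₁ ⊗ₜ c₂) ⊗ₜ (d₁ ⊗ₜ d₂)) =
      (b * (d₁ * c₁)) ⊗ₜ ((a ⊗ₜ (d₂ ⊗ₜ z)) ⊗ₜ (c₂ ⊗ₜ y)) := rfl

lemma sstar_lhs_eq {X A Y Z : ModuleCat R} (x : X) (b : B) (a : A) (c : B) (y : Y)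
    (d : B) (z : Z) :
    (starHom R B (sAssoc R B X A Y) (𝟙 Z) ≫ sAssoc R B X (star R B A Y) Z ≫
        starHom R B (𝟙 X) (swapS R B A Y Z))
      (((x ⊗ₜ (b ⊗ₜ a)) ⊗ₜ (c ⊗ₜ y)) ⊗ₜ (d ⊗ₜ z)) =
    x ⊗ₜ ΦL R B b a y z
      (Coalgebra.comul (R := R) c ⊗ₜ Coalgebra.comul (R := R) d) := by
  show (starHom R B (𝟙 X) (swapS R B A Y Z)) (sAssoc R B X (star R B A Y) Z
    ((sAssoc R B X A Y ((x ⊗ₜ (b ⊗ₜ a)) ⊗ₜ (c ⊗ₜ y))) ⊗ₜ (d ⊗ₜ z))) = _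
  rw [sAssoc_tmul]
  delta star
  generalize Coalgebra.comul (R := R) (A := B) c = t
  induction t using TensorProduct.induction_on with
  | zero => simp only [map_zero, tmul_zero, zero_tmul, map_zero]
  | add u v hu hv =>
      simp only [map_add, tmul_add, add_tmul, hu, hv]
  | tmul c₁ c₂ =>
      rw [vAux_tmul]
      refine (congrArg (ConcreteCategory.hom (starHom R B (𝟙 X) (swapS R B A Y Z)))
        (sAssoc_tmul R B (Y := star R B A Y) x (b * c₁) (a ⊗ₜ (c₂ ⊗ₜ y)) d z)).trans ?_
      show x ⊗ₜ ((Bc R B ◁ swapS R B A Y Z)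
            (vAux R B (Y := A ⊗ (Bc R B ⊗ Y)) (b * c₁) (a ⊗ₜ (c₂ ⊗ₜ y)) z
              (Coalgebra.comul (R := R) d))) = _
      delta star
      generalize Coalgebra.comul (R := R) (A := B) d = s
      induction s using TensorProduct.induction_on with
      | zero => simp only [map_zero, tmul_zero, zero_tmul]
      | add u v hu hv =>
          simp only [map_add, tmul_add, add_tmul, hu, hv]
      | tmul d₁ d₂ =>
          rw [vAux_tmul, ΦL_tmul]
          show x ⊗ₜ ((b * c₁ * d₁) ⊗ₜ ((a ⊗ₜ (d₂ ⊗ₜ z)) ⊗ₜ (c₂ ⊗ₜ y))) = _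
          rw [mul_assoc]

lemma sstar_rhs_eq {X A Y Z : ModuleCat R} (x : X) (b : B) (a : A) (c : B) (y : Y)
    (d : B) (z : Z) :
    (swapS R B (star R B X A) Y Z ≫ starHom R B (sAssoc R B X A Z) (𝟙 Y) ≫
        sAssoc R B X (star R B A Z) Y)
      (((x ⊗ₜ (b ⊗ₜ a)) ⊗ₜ (c ⊗ₜ y)) ⊗ₜ (d ⊗ₜ z)) =
    x ⊗ₜ ΦR R B b a y z
      (Coalgebra.comul (R := R) c ⊗ₜ Coalgebra.comul (R := R) d) := by
  show sAssoc R B X (star R B A Z) Y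
    ((sAssoc R B X A Z ((x ⊗ₜ (b ⊗ₜ a)) ⊗ₜ (d ⊗ₜ z))) ⊗ₜ (c ⊗ₜ y)) = _
  rw [sAssoc_tmul]
  delta star
  generalize Coalgebra.comul (R := R) (A := B) d = s
  induction s using TensorProduct.induction_on with
  | zero => simp only [map_zero, tmul_zero, zero_tmul]
  | add u v hu hv =>
      simp only [map_add, tmul_add, add_tmul, hu, hv]
  | tmul d₁ d₂ =>
      rw [vAux_tmul]
      refine (sAssoc_tmul R B (Y := star R B A Z) x (b * d₁) (a ⊗ₜ (d₂ ⊗ₜ z)) c y).trans ?_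
      delta star
      generalize Coalgebra.comul (R := R) (A := B) c = t
      induction t using TensorProduct.induction_on with
      | zero => simp only [map_zero, tmul_zero, zero_tmul]
      | add u v hu hv =>
          simp only [map_add, tmul_add, add_tmul, hu, hv]
      | tmul c₁ c₂ =>
          rw [vAux_tmul, ΦR_tmul, mul_assoc]

/-- The collapsing linear form on `B ⊗ R`. -/
noncomputable def eBR : B ⊗[R] R →ₗ[R] R :=
  (TensorProduct.lid R R).toLinearMap ∘ₗ
    LinearMap.rTensor R (Coalgebra.counit (R := R) (A := B))

/-- The collapsing linear form on `(R ⊗ (B ⊗ R)) ⊗ (B ⊗ R)`. -/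
noncomputable def eW : (R ⊗[R] (B ⊗[R] R)) ⊗[R] (B ⊗[R] R) →ₗ[R] R :=
  LinearMap.mul' R R ∘ₗ
    TensorProduct.map (eBR R B ∘ₗ (TensorProduct.lid R (B ⊗[R] R)).toLinearMap)
      (eBR R B)

/-- The collapsing map extracting `B` from the codomain of axiom (S*). -/
noncomputable def Tc :
    R ⊗[R] (B ⊗[R] ((R ⊗[R] (B ⊗[R] R)) ⊗[R] (B ⊗[R] R))) →ₗ[R] B :=
  (TensorProduct.rid R B).toLinearMap ∘ₗ
    LinearMap.lTensor B (eW R B) ∘ₗ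
    (TensorProduct.lid R (B ⊗[R] ((R ⊗[R] (B ⊗[R] R)) ⊗[R] (B ⊗[R] R)))).toLinearMap

/-- `colL (c₁ ⊗ c₂) = ε(c₂) • c₁`. -/
noncomputable def colL : B ⊗[R] B →ₗ[R] B :=
  (TensorProduct.rid R B).toLinearMap ∘ₗ
    LinearMap.lTensor B (Coalgebra.counit (R := R) (A := B))

lemma colL_comul (c : B) : colL R B (Coalgebra.comul (R := R) c) = c := by
  simp [colL, Coalgebra.lTensor_counit_comul]

lemma Tc_ΦL (b : B) (t s : B ⊗[R] B) :
    Tc R B ((1 : R) ⊗ₜ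
      (ΦL R B (A := 𝟙_ (ModuleCat R)) (Y := 𝟙_ (ModuleCat R)) (Z := 𝟙_ (ModuleCat R))
        b (1 : R) (1 : R) (1 : R) (t ⊗ₜ s))) =
    b * (colL R B t * colL R B s) := by
  induction t using TensorProduct.induction_on with
  | zero => simp [zero_tmul, tmul_zero]
  | add u v hu hv => simp only [add_tmul, map_add, tmul_add, hu, hv, add_mul, mul_add]
  | tmul c₁ c₂ =>
    induction s using TensorProduct.induction_on with
    | zero => simp [zero_tmul, tmul_zero]
    | add u v hu hv => simp only [tmul_add, map_add, hu, hv, add_mul, mul_add]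
    | tmul d₁ d₂ =>
        rw [ΦL_tmul]
        simp [Tc, eW, eBR, colL, LinearMap.mul'_apply, smul_smul,
          smul_mul_assoc, mul_smul_comm, mul_comm]

lemma Tc_ΦR (b : B) (t s : B ⊗[R] B) :
    Tc R B ((1 : R) ⊗ₜ
      (ΦR R B (A := 𝟙_ (ModuleCat R)) (Y := 𝟙_ (ModuleCat R)) (Z := 𝟙_ (ModuleCat R))
        b (1 : R) (1 : R) (1 : R) (t ⊗ₜ s))) =
    b * (colL R B s * colL R B t) := by
  induction t using TensorProduct.induction_on with
  | zero => simp [zero_tmul, tmul_zero]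
  | add u v hu hv => simp only [add_tmul, map_add, tmul_add, hu, hv, add_mul, mul_add]
  | tmul c₁ c₂ =>
    induction s using TensorProduct.induction_on with
    | zero => simp [zero_tmul, tmul_zero]
    | add u v hu hv => simp only [tmul_add, map_add, hu, hv, add_mul, mul_add]
    | tmul d₁ d₂ =>
        rw [ΦR_tmul]
        simp [Tc, eW, eBR, colL, LinearMap.mul'_apply, smul_smul,
          smul_mul_assoc, mul_smul_comm, mul_comm]

end Main

end ModRB

open ModRB in
/-- Remark 4.5: for a bialgebra `B` over `R` whose underlying
algebra is not commutative, the natural isomorphisms of `R-Mod[B]` induced by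
the symmetry of `R-Mod` swapping `B ⊗ A` and `B ⊗ Y` satisfy (S2), (S3a),
(S3b) and the symmetry axiom, while they satisfy (S*) if and only if `B` is
commutative — so in particular (S*) fails, exhibiting its independence from
the other braiding axioms. -/
theorem stmt17 (R : Type u) [CommRing R] (B : Type u) [Ring B] [Bialgebra R B]
    (hnc : ¬ ∀ a b : B, a * b = b * a) :
    S2 (R := R) (B := B) (swapS R B) ∧
    S3a (R := R) (B := B) (swapS R B) ∧
    S3b (R := R) (B := B) (swapS R B) ∧
    Symm (R := R) (B := B) (swapS R B) ∧
    (Sstar (R := R) (B := B) (swapS R B) ↔ ∀ a b : B, a * b = b * a) ∧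
    ¬ Sstar (R := R) (B := B) (swapS R B) := by
  have hiff : Sstar (R := R) (B := B) (swapS R B) ↔ ∀ a b : B, a * b = b * a := by
    constructor
    · intro hS c d
      have h := hS (𝟙_ (ModuleCat R)) (𝟙_ (ModuleCat R)) (𝟙_ (ModuleCat R))
        (𝟙_ (ModuleCat R))
      have h1 := (sstar_lhs_eq R B (X := 𝟙_ (ModuleCat R)) (A := 𝟙_ (ModuleCat R))
        (Y := 𝟙_ (ModuleCat R)) (Z := 𝟙_ (ModuleCat R))
        (1 : R) (1 : B) (1 : R) c (1 : R) d (1 : R)).symm.trans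
        ((ConcreteCategory.congr_hom h _).trans
          (sstar_rhs_eq R B (X := 𝟙_ (ModuleCat R)) (A := 𝟙_ (ModuleCat R))
            (Y := 𝟙_ (ModuleCat R)) (Z := 𝟙_ (ModuleCat R))
            (1 : R) (1 : B) (1 : R) c (1 : R) d (1 : R)))
      have h2 := (Tc_ΦL R B (1 : B) (Coalgebra.comul (R := R) c)
        (Coalgebra.comul (R := R) d)).symm.trans ((congrArg (Tc R B) h1).trans
          (Tc_ΦR R B (1 : B) (Coalgebra.comul (R := R) c) (Coalgebra.comul (R := R) d)))
      rw [colL_comul, colL_comul, one_mul, one_mul] at h2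
      exact h2
    · intro hcomm
      intro X A Y Z
      apply ext4
      intro x b a c y d z
      rw [sstar_lhs_eq, sstar_rhs_eq]
      congr 1
      have hPhi : ΦL R B (A := A) (Y := Y) (Z := Z) b a y z =
          ΦR R B (A := A) (Y := Y) (Z := Z) b a y z := by
        apply TensorProduct.ext'
        intro t s
        induction t using TensorProduct.induction_on with
        | zero => simp only [map_zero, zero_tmul]
        | add u v hu hv => simp only [map_add, add_tmul, hu, hv]
        | tmul c₁ c₂ =>
          induction s using TensorProduct.induction_on with
          | zero => simp only [map_zero, tmul_zero]
          | add u v hu hv => simp only [map_add, tmul_add, hu, hv]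
          | tmul d₁ d₂ => rw [ΦL_tmul, ΦR_tmul, hcomm c₁ d₁]
      rw [hPhi]
  refine ⟨?_, ?_, ?_, ?_, hiff, fun hS => hnc (hiff.mp hS)⟩
  · -- S2
    intro X A Y Z
    apply ext4
    intro x b a c y d z
    rfl
  · -- S3a
    intro X A Y Z
    apply ext4
    intro x b a c y d z
    show (sAssoc R B X Y Z ((x ⊗ₜ (c ⊗ₜ y)) ⊗ₜ (d ⊗ₜ z))) ⊗ₜ (b ⊗ₜ a) =
      swapS R B X A (star R B Y Z)
        (sAssoc R B (star R B X A) Y Z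
          (((x ⊗ₜ (b ⊗ₜ a)) ⊗ₜ (c ⊗ₜ y)) ⊗ₜ (d ⊗ₜ z)))
    erw [sAssoc_tmul, sAssoc_tmul]
    delta ModRB.star
    generalize Coalgebra.comul (R := R) (A := B) d = t
    induction t using TensorProduct.induction_on with
    | zero => simp only [map_zero, tmul_zero, zero_tmul]
    | add u v hu hv => simp only [map_add, tmul_add, add_tmul, hu, hv]
    | tmul d₁ d₂ => rfl
  · -- S3b
    intro X A Y Z
    apply ext4
    intro x b a c y d z
    show sAssoc R B (star R B X Z) A Y
        (((x ⊗ₜ (d ⊗ₜ z)) ⊗ₜ (b ⊗ₜ a)) ⊗ₜ (c ⊗ₜ y)) =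
      swapS R B X (star R B A Y) Z
        ((sAssoc R B X A Y ((x ⊗ₜ (b ⊗ₜ a)) ⊗ₜ (c ⊗ₜ y))) ⊗ₜ (d ⊗ₜ z))
    erw [sAssoc_tmul]
  · -- Symm
    intro X A Y
    apply ext3
    intro x b a c y
    rfl
end
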